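/- Let X ⊂ √m S^{m-1} be a finite set and Pol_k(X) the space of functions on X defined recursively by: Pol_0(X) = constant functions, Pol_1(X) = span of zonal polynomials ζ_a(p) for a ∈ X and deg p ≤ 1, and Pol_k(X) = span{fg : f ∈ Pol_1(X), g ∈ Pol_{k-1}(X)} for k ≥ 2. Then for each nonnegative integer k, Pol_k(X) = span_ℝ{ζ_a(p) : a ∈ X, deg p ≤ k}. -/

import Mathlib

open scoped InnerProductSpace Classical

noncomputable section

variable {V : Type*} [NormedAddCommGroup V] [InnerProductSpace ℝ V]

/-- `X` lies on the sphere of squared radius `m` (radius `√m`). -/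
def onSphere (m : ℝ) (X : Finset V) : Prop := ∀ x ∈ X, ⟪x, x⟫_ℝ = m

/-- The normalized Gram matrix `G` of `X`. -/
def gram (X : Finset V) : Matrix X X ℝ :=
  Matrix.of fun x y => (1 / (X.card : ℝ)) * ⟪(x : V), (y : V)⟫_ℝ

/-- The two conditions characterizing spherical 2-designs: `GJ = 0` and `G² = G`. -/
def IsTwoDesign (X : Finset V) : Prop :=
  (∀ x ∈ X, ∑ y ∈ X, ⟪x, y⟫_ℝ = 0) ∧
  (∀ x ∈ X, ∀ y ∈ X, (1 / (X.card : ℝ)) * ∑ z ∈ X, ⟪x, z⟫_ℝ * ⟪z, y⟫_ℝ = ⟪x, y⟫_ℝ)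

/-- `Pol_k(X)`: span of the zonal polynomials of degree at most `k`. -/
def Pol (X : Finset V) (k : ℕ) : Submodule ℝ (X → ℝ) :=
  Submodule.span ℝ {f | ∃ a ∈ X, ∃ p : Polynomial ℝ,
    p.natDegree ≤ k ∧ f = fun x => p.eval ⟪a, x.1⟫_ℝ}

/-- The inner product `(f,g) = (1/n) ∑ f(x) g(x)` on `C(X)`. -/
def inn (X : Finset V) (f g : X → ℝ) : ℝ := (1 / (X.card : ℝ)) * ∑ x, f x * g x

def innL (X : Finset V) (f : X → ℝ) : (X → ℝ) →ₗ[ℝ] ℝ where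
  toFun g := inn X f g
  map_add' g h := by
    simp only [inn, Pi.add_apply, mul_add, Finset.sum_add_distrib]
  map_smul' c g := by
    simp only [inn, Pi.smul_apply, smul_eq_mul, RingHom.id_apply]
    rw [Finset.sum_congr rfl (fun x _ => by ring : ∀ x ∈ Finset.univ, f x * (c * g x) = c * (f x * g x)),
      ← Finset.mul_sum]
    ring

/-- The orthogonal complement of `W` with respect to `inn`. -/
def perp (X : Finset V) (W : Submodule ℝ (X → ℝ)) : Submodule ℝ (X → ℝ) :=
  ⨅ f ∈ W, LinearMap.ker (innL X f)

/-- The harmonic spaces `Harm_k(X)`. -/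
def Harm (X : Finset V) : ℕ → Submodule ℝ (X → ℝ)
  | 0 => Pol X 0
  | (k+1) => Pol X (k+1) ⊓ perp X (Pol X k)

/-- `F` is the matrix of the orthogonal projection of `C(X)` onto `W`
(with respect to the inner product `inn`). -/
def IsProjOnto (X : Finset V) (W : Submodule ℝ (X → ℝ)) (F : Matrix X X ℝ) : Prop :=
  (∀ f, F.mulVec f ∈ W) ∧ (∀ f ∈ W, F.mulVec f = f) ∧ (∀ f ∈ perp X W, F.mulVec f = 0)

/-- The degree `S` of `X`: the least `i` with `Pol_i(X) = C(X)`. -/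
def degS (X : Finset V) : ℕ := sInf {i | Pol X i = ⊤}

/-- `A(X)`, the set of inner products between distinct points of `X`. -/
def Aset (X : Finset V) : Finset ℝ :=
  ((X ×ˢ X).filter fun p => p.1 ≠ p.2).image fun p => ⟪p.1, p.2⟫_ℝ

/-- `A'(X) = A(X) ∪ {m}`. -/
def Aset' (m : ℝ) (X : Finset V) : Finset ℝ := insert m (Aset X)

/-- `κ_α`, the number of ordered pairs of points of `X` with inner product `α`. -/
def kappa (X : Finset V) (α : ℝ) : ℕ := ((X ×ˢ X).filter fun p => ⟪p.1, p.2⟫_ℝ = α).card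

/-- The inner product `⟨p,q⟩ = (1/n²) ∑_{α ∈ A'(X)} κ_α p(α) q(α)` on polynomials. -/
def pInn (m : ℝ) (X : Finset V) (p q : Polynomial ℝ) : ℝ :=
  (1 / (X.card : ℝ) ^ 2) * ∑ α ∈ Aset' m X, (kappa X α : ℝ) * (p.eval α * q.eval α)

/-- `q` is the family of predegree polynomials of `X`. -/
def IsPredegree (m : ℝ) (X : Finset V) (s : ℕ) (q : ℕ → Polynomial ℝ) : Prop :=
  (∀ k ≤ s, (q k).natDegree = k ∧ q k ≠ 0) ∧
  (∀ k ≤ s, ∀ h ≤ s, pInn m X (q k) (q h) = if k = h then (q k).eval m else 0)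

/-- The relation matrix `A_α` of `X`. -/
def relMat (X : Finset V) (α : ℝ) : Matrix X X ℝ :=
  Matrix.of fun x y => if ⟪(x : V), (y : V)⟫_ℝ = α then 1 else 0

/-- `X` carries the structure of a `Q`-polynomial association scheme with respect to
the idempotents `F_0, …, F_s` (whose relations are given by the inner products). -/
def CarriesQPolyScheme (m : ℝ) (X : Finset V) (s : ℕ) (F : ℕ → Matrix X X ℝ) : Prop :=
  (∀ α ∈ Aset' m X, ∀ β ∈ Aset' m X, relMat X α * relMat X β ∈
      Submodule.span ℝ (relMat X '' (Aset' m X : Set ℝ))) ∧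
  (∀ i ≤ s, F i ∈ Submodule.span ℝ (relMat X '' (Aset' m X : Set ℝ))) ∧
  (∀ i ≤ s, ∀ j ≤ s, F i * F j = if i = j then F i else 0) ∧
  (∑ i ∈ Finset.range (s + 1), F i = 1) ∧
  (F 0 = Matrix.of fun _ _ => 1 / (X.card : ℝ)) ∧
  (∀ i ≤ s, ∃ v : Polynomial ℝ, v.natDegree = i ∧
      F i = Matrix.of fun x y => (1 / (X.card : ℝ)) * v.eval ((X.card : ℝ) * F 1 x y))


/-- `Pol_1(X)`: span of the zonal polynomials of degree at most `1`. -/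
def Pol1 (X : Finset V) : Submodule ℝ (X → ℝ) :=
  Submodule.span ℝ {f | ∃ a ∈ X, ∃ p : Polynomial ℝ,
    p.natDegree ≤ 1 ∧ f = fun x => p.eval ⟪a, x.1⟫_ℝ}

/-- The recursive definition of `Pol_k(X)`: `Pol_0` consists of the constant functions,
`Pol_1` is the span of the zonal polynomials of degree at most 1, and
`Pol_k = span{fg : f ∈ Pol_1, g ∈ Pol_{k-1}}` for `k ≥ 2`. -/
def PolRec (X : Finset V) : ℕ → Submodule ℝ (X → ℝ)
  | 0 => Submodule.span ℝ {f | ∃ c : ℝ, f = fun _ => c}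
  | 1 => Pol1 X
  | (k + 2) => Submodule.span ℝ
      {h | ∃ f ∈ Pol1 X, ∃ g ∈ PolRec X (k + 1), h = f * g}

theorem Pol_mono (X : Finset V) {k l : ℕ} (h : k ≤ l) : Pol X k ≤ Pol X l :=
  Submodule.span_mono (fun f ⟨a, ha, p, hp, hf⟩ => ⟨a, ha, p, hp.trans h, hf⟩)

theorem const_mem_polRec {X : Finset V} {a : V} (ha : a ∈ X) :
    ∀ (k : ℕ) (c : ℝ), (fun _ : ↥X => c) ∈ PolRec X k
  | 0, c => Submodule.subset_span ⟨c, rfl⟩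
  | 1, c => Submodule.subset_span ⟨a, ha, Polynomial.C c, by simp, funext fun x => by simp⟩
  | (k+2), c => by
    have h1 : (fun _ : ↥X => c) = (fun _ : ↥X => c) * (fun _ : ↥X => (1:ℝ)) := by
      funext x; simp
    rw [h1]
    exact Submodule.subset_span ⟨_,
      Submodule.subset_span ⟨a, ha, Polynomial.C c, by simp, funext fun x => by simp⟩,
      _, const_mem_polRec ha (k+1) 1, rfl⟩

theorem rearr1 {ι κ : Type*} [Fintype ι] [Fintype κ] (w : ι → ℝ) (P : κ → ι → ℝ) :
    ∑ y : ι, w y * ∑ x : ι, w x * (∑ s : κ, P s y * P s x)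
      = ∑ s : κ, (∑ x : ι, w x * P s x) ^ 2 := by
  have h1 : ∑ s : κ, (∑ x : ι, w x * P s x) ^ 2
      = ∑ y : ι, ∑ x : ι, ∑ s : κ, (w y * P s y) * (w x * P s x) := by
    simp only [pow_two, Finset.sum_mul_sum]
    rw [Finset.sum_comm]
    refine Finset.sum_congr rfl fun y _ => ?_
    rw [Finset.sum_comm]
  rw [h1]
  simp only [Finset.mul_sum]
  refine Finset.sum_congr rfl fun y _ => Finset.sum_congr rfl fun x _ =>
    Finset.sum_congr rfl fun s _ => by ring

theorem rearr2 {ι κ κ' : Type*} [Fintype ι] [Fintype κ] [Fintype κ'] (w : ι → ℝ)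
    (A : κ → ℝ) (B : κ' → ℝ) (P : κ → ι → ℝ) (Q : κ' → ι → ℝ) :
    ∑ x, w x * ((∑ s, A s * P s x) * (∑ s', B s' * Q s' x)) =
      ∑ s, ∑ s', (A s * B s') * (∑ x, w x * (P s x * Q s' x)) := by
  have h1 : ∀ x, w x * ((∑ s, A s * P s x) * (∑ s', B s' * Q s' x))
      = ∑ s, ∑ s', (A s * B s') * (w x * (P s x * Q s' x)) := by
    intro x
    rw [Finset.sum_mul_sum, Finset.mul_sum]
    refine Finset.sum_congr rfl fun s _ => ?_
    rw [Finset.mul_sum]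
    exact Finset.sum_congr rfl fun s' _ => by ring
  simp only [h1]
  rw [Finset.sum_comm]
  refine Finset.sum_congr rfl fun s _ => ?_
  rw [Finset.sum_comm]
  refine Finset.sum_congr rfl fun s' _ => ?_
  rw [Finset.mul_sum]

section core
variable {m : ℕ}

theorem expand_inner (c d : EuclideanSpace ℝ (Fin m)) (i : ℕ) :
    ⟪c, d⟫_ℝ ^ i = ∑ s : Fin i → Fin m, (∏ t, c (s t)) * (∏ t, d (s t)) := by
  have h : ⟪c, d⟫_ℝ = ∑ t, c t * d t := by simp [PiLp.inner_apply, mul_comm]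
  rw [h, Fintype.sum_pow]
  exact Finset.sum_congr rfl fun p _ => by rw [Finset.prod_mul_distrib]

set_option maxHeartbeats 1000000 in
theorem core (X : Finset (EuclideanSpace ℝ (Fin m)))
    (a b : EuclideanSpace ℝ (Fin m)) (u v : ℕ) :
    (fun x : X => ⟪a, x.1⟫_ℝ ^ u * ⟪b, x.1⟫_ℝ ^ v) ∈ Pol X (u + v) := by
  set g : ↥X → ℝ := fun x : X => ⟪a, x.1⟫_ℝ ^ u * ⟪b, x.1⟫_ℝ ^ v with hg
  let L : EuclideanSpace ℝ (↥X) ≃ₗ[ℝ] (↥X → ℝ) := WithLp.linearEquiv 2 ℝ _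
  let S : Submodule ℝ (EuclideanSpace ℝ (↥X)) := (Pol X (u + v)).comap (L : EuclideanSpace ℝ (↥X) →ₗ[ℝ] (↥X → ℝ))
  have hgoal : L.symm g ∈ S → g ∈ Pol X (u+v) := by
    intro h; have : L (L.symm g) ∈ Pol X (u+v) := h; simpa using this
  apply hgoal
  rw [← Submodule.orthogonal_orthogonal S, Submodule.mem_orthogonal]
  intro f hf
  have key : ∀ c ∈ X, ∀ i : ℕ, i ≤ u + v →
      ∑ x : ↥X, f x * ⟪c, (x : EuclideanSpace ℝ (Fin m))⟫_ℝ ^ i = 0 := by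
    intro c hc i hi
    set z : ↥X → ℝ := fun x => ⟪c, x.1⟫_ℝ ^ i with hz
    have hzmem : (L.symm z) ∈ S := by
      show L (L.symm z) ∈ Pol X (u+v)
      simp only [LinearEquiv.apply_symm_apply]
      exact Submodule.subset_span ⟨c, hc, Polynomial.X ^ i,
        by simpa using hi, funext fun x => by simp [hz]⟩
    have h1 := (Submodule.mem_orthogonal S f).mp hf (L.symm z) hzmem
    have h2 : ∑ x : ↥X, z x * f x = 0 := by
      simp [PiLp.inner_apply] at h1
      rw [← h1]
      exact Finset.sum_congr rfl fun x _ => mul_comm _ _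
    rw [← h2]
    exact Finset.sum_congr rfl fun x _ => by rw [hz]; ring
  set T : ∀ i : ℕ, (Fin i → Fin m) → ℝ :=
    fun i s => ∑ x : ↥X, f x * ∏ t, (x : EuclideanSpace ℝ (Fin m)) (s t) with hTdef
  have hT : ∀ i : ℕ, i ≤ u + v → ∀ s : Fin i → Fin m, T i s = 0 := by
    intro i hi
    have hsq : ∑ s : Fin i → Fin m, (T i s) ^ 2 = 0 := by
      have calc1 : ∑ y : ↥X, f y * ∑ x : ↥X, f x *
            ⟪(y : EuclideanSpace ℝ (Fin m)), (x : EuclideanSpace ℝ (Fin m))⟫_ℝ ^ i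
          = ∑ s : Fin i → Fin m, (T i s) ^ 2 := by
        simp only [expand_inner]
        exact rearr1 f _
      rw [← calc1]
      exact Finset.sum_eq_zero fun y _ => by rw [key y.1 y.2 i hi, mul_zero]
    intro s
    have h3 := (Finset.sum_eq_zero_iff_of_nonneg
      (fun s _ => sq_nonneg (T i s))).mp hsq s (Finset.mem_univ s)
    exact pow_eq_zero_iff (two_ne_zero) |>.mp h3
  have happ : ∀ (s : Fin u → Fin m) (s' : Fin v → Fin m) (x : ↥X),
      (∏ t, (x : EuclideanSpace ℝ (Fin m)) (s t)) * (∏ t, (x : EuclideanSpace ℝ (Fin m)) (s' t))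
        = ∏ t : Fin (u+v), (x : EuclideanSpace ℝ (Fin m)) (Fin.append s s' t) := by
    intro s s' x
    rw [Fin.prod_univ_add (f := fun t => (x : EuclideanSpace ℝ (Fin m)) (Fin.append s s' t))]
    exact congrArg₂ (· * ·)
      (Finset.prod_congr rfl fun i _ => by rw [Fin.append_left])
      (Finset.prod_congr rfl fun i _ => by rw [Fin.append_right])
  have final : ⟪f, L.symm g⟫_ℝ = ∑ x : ↥X, f x * (⟪a, x.1⟫_ℝ ^ u * ⟪b, x.1⟫_ℝ ^ v) := by
    simp [PiLp.inner_apply]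
    exact Finset.sum_congr rfl fun x _ => by
      rw [mul_comm]; change f x * g x = _; simp [hg, PiLp.inner_apply, mul_comm]
  rw [final]
  simp only [expand_inner]
  have h5 : ∑ x : ↥X, f x * ((∑ s : Fin u → Fin m, (∏ t, a (s t)) *
        ∏ t, (x : EuclideanSpace ℝ (Fin m)) (s t)) *
        ∑ s' : Fin v → Fin m, (∏ t, b (s' t)) * ∏ t, (x : EuclideanSpace ℝ (Fin m)) (s' t))
      = ∑ s : Fin u → Fin m, ∑ s' : Fin v → Fin m, ((∏ t, a (s t)) * (∏ t, b (s' t))) *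
        ∑ x : ↥X, f x * ((∏ t, (x : EuclideanSpace ℝ (Fin m)) (s t)) *
          (∏ t, (x : EuclideanSpace ℝ (Fin m)) (s' t))) := rearr2 f _ _ _ _
  rw [h5]
  refine Finset.sum_eq_zero fun s _ => Finset.sum_eq_zero fun s' _ => ?_
  have h4 : ∑ x : ↥X, f x * ((∏ t, (x : EuclideanSpace ℝ (Fin m)) (s t)) *
      (∏ t, (x : EuclideanSpace ℝ (Fin m)) (s' t))) = T (u+v) (Fin.append s s') := by
    exact Finset.sum_congr rfl fun x _ => by rw [happ]
  rw [h4, hT (u+v) le_rfl, mul_zero]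

theorem gen_mul_gen (X : Finset (EuclideanSpace ℝ (Fin m)))
    (a b : EuclideanSpace ℝ (Fin m)) {p q : Polynomial ℝ} {i j : ℕ}
    (hp : p.natDegree ≤ i) (hq : q.natDegree ≤ j) :
    (fun x : X => p.eval ⟪a, x.1⟫_ℝ * q.eval ⟪b, x.1⟫_ℝ) ∈ Pol X (i + j) := by
  have hfun : (fun x : X => p.eval ⟪a, x.1⟫_ℝ * q.eval ⟪b, x.1⟫_ℝ)
      = ∑ u ∈ Finset.range (i+1), ∑ v ∈ Finset.range (j+1),
        (p.coeff u * q.coeff v) • (fun x : X => ⟪a, x.1⟫_ℝ ^ u * ⟪b, x.1⟫_ℝ ^ v) := by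
    funext x
    simp only [Finset.sum_apply, Pi.smul_apply, smul_eq_mul]
    rw [Polynomial.eval_eq_sum_range' (Nat.lt_succ_of_le hp),
      Polynomial.eval_eq_sum_range' (Nat.lt_succ_of_le hq), Finset.sum_mul_sum]
    exact Finset.sum_congr rfl fun u _ => Finset.sum_congr rfl fun v _ => by ring
  rw [hfun]
  refine Submodule.sum_mem _ fun u hu => Submodule.sum_mem _ fun v hv =>
    Submodule.smul_mem _ _ ?_
  have hu' : u ≤ i := Nat.lt_succ_iff.mp (Finset.mem_range.mp hu)
  have hv' : v ≤ j := Nat.lt_succ_iff.mp (Finset.mem_range.mp hv)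
  exact Pol_mono X (by omega) (core X a b u v)

theorem mul_mem_pol (X : Finset (EuclideanSpace ℝ (Fin m))) {i j : ℕ} {f g : ↥X → ℝ}
    (hf : f ∈ Pol X i) (hg : g ∈ Pol X j) : f * g ∈ Pol X (i + j) := by
  have step1 : ∀ f' ∈ {f | ∃ a ∈ X, ∃ p : Polynomial ℝ,
      p.natDegree ≤ i ∧ f = fun x : X => p.eval ⟪a, x.1⟫_ℝ}, f' * g ∈ Pol X (i + j) := by
    rintro f' ⟨a, ha, p, hp, rfl⟩
    have hle : Pol X j ≤ (Pol X (i + j)).comap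
        (LinearMap.mulLeft ℝ (fun x : X => p.eval ⟪a, x.1⟫_ℝ)) := by
      refine Submodule.span_le.mpr ?_
      rintro g' ⟨b, hb, q, hq, rfl⟩
      exact gen_mul_gen X a b hp hq
    exact hle hg
  have hle2 : Pol X i ≤ (Pol X (i + j)).comap (LinearMap.mulRight ℝ g) :=
    Submodule.span_le.mpr fun f' hf' => step1 f' hf'
  exact hle2 hf

end core

theorem statement_1 {m : ℕ} (X : Finset (EuclideanSpace ℝ (Fin m)))
    (hsph : onSphere (m : ℝ) X) (k : ℕ) :
    PolRec X k = Pol X k := by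
  induction k with
  | zero =>
    refine le_antisymm (Submodule.span_le.mpr ?_) (Submodule.span_le.mpr ?_)
    · rintro f ⟨c, rfl⟩
      rcases X.eq_empty_or_nonempty with hX | ⟨a, ha⟩
      · have h0 : (fun _ : ↥X => c) = 0 := funext fun x => absurd x.2 (by simp [hX])
        rw [h0]; exact Submodule.zero_mem _
      · exact Submodule.subset_span ⟨a, ha, Polynomial.C c, by simp,
          funext fun x => by simp⟩
    · rintro f ⟨a, ha, p, hp, rfl⟩
      have hC := Polynomial.eq_C_of_natDegree_le_zero hp
      exact Submodule.subset_span ⟨p.coeff 0, funext fun x => by rw [hC]; simp⟩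
  | succ n ih =>
    cases n with
    | zero => rfl
    | succ j =>
      refine le_antisymm (Submodule.span_le.mpr ?_) (Submodule.span_le.mpr ?_)
      · rintro h ⟨f, hf, g, hg, rfl⟩
        rw [ih] at hg
        have hf' : f ∈ Pol X 1 := hf
        have hm := mul_mem_pol X hf' hg
        have e : 1 + (j + 1) = j + 2 := by omega
        rw [e] at hm
        exact hm
      · rintro h ⟨a, ha, p, hp, rfl⟩
        have hdecomp : (fun x : X => p.eval ⟪a, x.1⟫_ℝ)
            = (fun x : X => (Polynomial.X : Polynomial ℝ).eval ⟪a, x.1⟫_ℝ) *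
              (fun x : X => p.divX.eval ⟪a, x.1⟫_ℝ) + (fun _ : X => p.coeff 0) := by
          funext x
          simp only [Pi.add_apply, Pi.mul_apply, Polynomial.eval_X]
          nth_rewrite 1 [← Polynomial.divX_mul_X_add p]
          rw [Polynomial.eval_add, Polynomial.eval_mul, Polynomial.eval_X,
            Polynomial.eval_C, mul_comm]
        rw [hdecomp]
        refine Submodule.add_mem _ ?_ (const_mem_polRec ha _ _)
        refine Submodule.subset_span ⟨_,
          Submodule.subset_span ⟨a, ha, Polynomial.X, Polynomial.natDegree_X_le, rfl⟩,
          _, ?_, rfl⟩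
        show _ ∈ PolRec X (j + 1)
        rw [ih]
        refine Submodule.subset_span ⟨a, ha, p.divX, ?_, rfl⟩
        have := p.natDegree_divX_eq_natDegree_tsub_one
        omega


end
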